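/- Theorem 2, equation (appro) — quadratic-order equivariance error of the discretized first layer: Let S be a finite subgroup of O(2), let d ≥ 0, fix coefficients β defining the transformed operators χ^{(A)}, and let M, C, h₀ > 0. Let P ⊂ ℤ² be a finite set and, for each A ∈ S and each h ∈ (0, h₀], let c^A_p(h) ∈ ℝ (p ∈ P) be stencil coefficients satisfying the consistency hypothesis: for every function g : ℝ² → ℝ that is (d+2) times continuously differentiable with ‖D^j g(z)‖ ≤ M for all z ∈ ℝ² and all j ≤ d+2, every A ∈ S, every x ∈ ℝ² and every h ∈ (0, h₀], |Σ_{p∈P} c^A_p(h)·g(x + h·p) − χ^{(A)}[g](x)| ≤ C·h². Then for every r : ℝ² → ℝ that is (d+2) times continuously differentiable with ‖D^j r(z)‖ ≤ M for all z and all j ≤ d+2, every Ã, A ∈ S, every x ∈ ℝ² and every h ∈ (0, h₀], |Σ_{p∈P} c^A_p(h)·r(Ã⁻¹(x + h·p)) − χ^{(Ã⁻¹A)}[r](Ã⁻¹x)| ≤ C·h². That is, applying the discretized operator to the transformed input π_Ã[r] agrees with the transformed continuous feature map π^E_Ã[Ψ[r]] evaluated at (x, A) up to an error of order h². -/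

import Mathlib

/-- Action of an `n × n` real matrix on `ℝⁿ` (with the Euclidean norm) by
matrix-vector multiplication. -/
noncomputable def mact {n : ℕ} (A : Matrix (Fin n) (Fin n) ℝ) :
    EuclideanSpace ℝ (Fin n) →ₗ[ℝ] EuclideanSpace ℝ (Fin n) :=
  Matrix.toEuclideanLin A

/-- The list of direction vectors `A e₁` repeated `m 1` times, ..., `A eₙ` repeated
`m n` times, as a function on `Fin (∑ i, m i)` (block `i` consists of copies of `A eᵢ`). -/
noncomputable def dirs {n : ℕ} (A : Matrix (Fin n) (Fin n) ℝ) (m : Fin n → ℕ)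
    (j : Fin (∑ i, m i)) : EuclideanSpace ℝ (Fin n) :=
  (((List.finRange n).flatMap fun i =>
      List.replicate (m i) (mact A (EuclideanSpace.single i 1)))).getD j 0

/-- The transformed differential operator
`χ^{(A)}[r](x) = ∑_{|m| ≤ d} β_m · D^{|m|} r(x)[A e₁ repeated m₁ times, …, A eₙ repeated mₙ times]`,
where multi-indices `m ∈ ℕⁿ` with `|m| ≤ d` (hence each entry `≤ d`) are encoded as
functions `Fin n → Fin (d+1)`. -/
noncomputable def chi {n d : ℕ} (β : (Fin n → Fin (d+1)) → ℝ)
    (A : Matrix (Fin n) (Fin n) ℝ)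
    (r : EuclideanSpace ℝ (Fin n) → ℝ) (x : EuclideanSpace ℝ (Fin n)) : ℝ :=
  ∑ m : Fin n → Fin (d+1),
    if (∑ i, (m i : ℕ)) ≤ d then
      β m * iteratedFDeriv ℝ (∑ i, (m i : ℕ)) r x (dirs A fun i => (m i : ℕ))
    else 0

/-- The matrix underlying an element of a subgroup `S ≤ O(2)`. -/
noncomputable def matS {S : Subgroup ↥(Matrix.orthogonalGroup (Fin 2) ℝ)}
    (A : S) : Matrix (Fin 2) (Fin 2) ℝ :=
  ((A : ↥(Matrix.orthogonalGroup (Fin 2) ℝ)) : Matrix (Fin 2) (Fin 2) ℝ)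

/-- The grid point `p ∈ ℤ²` as a point of the Euclidean plane. -/
noncomputable def gridpt (p : ℤ × ℤ) : EuclideanSpace ℝ (Fin 2) :=
  WithLp.toLp 2 ![(p.1 : ℝ), (p.2 : ℝ)]

lemma mact_mul {n : ℕ} (A B : Matrix (Fin n) (Fin n) ℝ) (v : EuclideanSpace ℝ (Fin n)) :
    mact (A * B) v = mact A (mact B v) := by
  simp [mact, Matrix.toEuclideanLin_apply, Matrix.mulVec_mulVec]

lemma mact_one {n : ℕ} (v : EuclideanSpace ℝ (Fin n)) : mact (1 : Matrix (Fin n) (Fin n) ℝ) v = v := by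
  simp [mact, Matrix.toEuclideanLin_apply]

noncomputable def isoO {n : ℕ} (U : Matrix.orthogonalGroup (Fin n) ℝ) :
    EuclideanSpace ℝ (Fin n) ≃ₗᵢ[ℝ] EuclideanSpace ℝ (Fin n) :=
  LinearEquiv.isometryOfInner
    (LinearEquiv.ofLinear (mact (U : Matrix (Fin n) (Fin n) ℝ))
      (mact ((U⁻¹ : Matrix.orthogonalGroup (Fin n) ℝ) : Matrix (Fin n) (Fin n) ℝ))
      (by ext v; simp [← mact_mul]; rw [mact_one])
      (by ext v; simp [← mact_mul]; rw [mact_one]))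
    (by
      intro x y
      have hadj : Matrix.toEuclideanLin (star (U : Matrix (Fin n) (Fin n) ℝ)) =
          LinearMap.adjoint (Matrix.toEuclideanLin (U : Matrix (Fin n) (Fin n) ℝ)) := by
        rw [Matrix.star_eq_conjTranspose]
        exact Matrix.toEuclideanLin_conjTranspose_eq_adjoint _
      show (inner ℝ (mact (U : Matrix (Fin n) (Fin n) ℝ) x) (mact (U : Matrix (Fin n) (Fin n) ℝ) y) : ℝ) = inner ℝ x y
      rw [show (inner ℝ x y : ℝ) = inner ℝ (mact ((star (U : Matrix (Fin n) (Fin n) ℝ)) * (U : Matrix (Fin n) (Fin n) ℝ)) x) y by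
        rw [show (star (U : Matrix (Fin n) (Fin n) ℝ)) * (U : Matrix (Fin n) (Fin n) ℝ) = 1 from U.prop.1, mact_one]]
      rw [mact_mul]
      show _ = (inner ℝ (Matrix.toEuclideanLin (star (U : Matrix (Fin n) (Fin n) ℝ)) (mact (U : Matrix (Fin n) (Fin n) ℝ) x)) y : ℝ)
      rw [hadj, LinearMap.adjoint_inner_left]
      rfl)

lemma isoO_apply {n : ℕ} (U : Matrix.orthogonalGroup (Fin n) ℝ) (v : EuclideanSpace ℝ (Fin n)) :
    isoO U v = mact (U : Matrix (Fin n) (Fin n) ℝ) v := rfl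

lemma dirs_mul {n : ℕ} (A B : Matrix (Fin n) (Fin n) ℝ) (m : Fin n → ℕ)
    (j : Fin (∑ i, m i)) : dirs (A * B) m j = mact A (dirs B m j) := by
  unfold dirs
  rw [show ((List.finRange n).flatMap fun i =>
        List.replicate (m i) (mact (A * B) (EuclideanSpace.single i 1)))
      = (((List.finRange n).flatMap fun i =>
        List.replicate (m i) (mact B (EuclideanSpace.single i 1)))).map (mact A) by
    rw [List.map_flatMap]
    congr 1
    funext i
    rw [List.map_replicate, mact_mul]]
  rw [show (0 : EuclideanSpace ℝ (Fin n)) = mact A 0 by simp, List.getD_map]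
  simp

/-- Theorem 2, equation (appro): quadratic-order equivariance error of
the discretized first layer.  Assume the stencils `c^A_p(h)` (supported on the finite
set `P ⊂ ℤ²`) approximate the operators `χ^{(A)}` with error `≤ C·h²` uniformly over
functions whose derivatives of order `≤ d+2` are bounded by `M` and over `h ∈ (0, h₀]`.
Then for any such `r` and any `Ã, A ∈ S`, applying the discretized operator to
`π_Ã[r]` agrees with `χ^{(Ã⁻¹A)}[r](Ã⁻¹x) = π^E_Ã[Ψ[r]](x, A)` up to `C·h²`. -/
theorem discretized_Psi_equivariance_error {d : ℕ}
    (S : Subgroup ↥(Matrix.orthogonalGroup (Fin 2) ℝ)) (hS : (S : Set ↥(Matrix.orthogonalGroup (Fin 2) ℝ)).Finite)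
    (β : (Fin 2 → Fin (d+1)) → ℝ) (M C h₀ : ℝ) (hM : 0 < M) (hC : 0 < C)
    (hh₀ : 0 < h₀) (P : Finset (ℤ × ℤ)) (c : S → ℤ × ℤ → ℝ → ℝ)
    (hcons : ∀ g : EuclideanSpace ℝ (Fin 2) → ℝ, ContDiff ℝ ((d + 2 : ℕ) : ℕ∞) g →
      (∀ z, ∀ j ≤ d + 2, ‖iteratedFDeriv ℝ j g z‖ ≤ M) →
      ∀ A : S, ∀ x : EuclideanSpace ℝ (Fin 2), ∀ h : ℝ, 0 < h → h ≤ h₀ →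
        |(∑ p ∈ P, c A p h * g (x + h • gridpt p)) - chi β (matS A) g x| ≤ C * h ^ 2) :
    ∀ r : EuclideanSpace ℝ (Fin 2) → ℝ, ContDiff ℝ ((d + 2 : ℕ) : ℕ∞) r →
      (∀ z, ∀ j ≤ d + 2, ‖iteratedFDeriv ℝ j r z‖ ≤ M) →
      ∀ Atil A : S, ∀ x : EuclideanSpace ℝ (Fin 2), ∀ h : ℝ, 0 < h → h ≤ h₀ →
        |(∑ p ∈ P, c A p h * r (mact (matS Atil⁻¹) (x + h • gridpt p)))
            - chi β (matS (Atil⁻¹ * A)) r (mact (matS Atil⁻¹) x)| ≤ C * h ^ 2 := by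
  intro r hr hbd Atil A x h hpos hle
  set Uel : Matrix.orthogonalGroup (Fin 2) ℝ := ((Atil⁻¹ : S) : Matrix.orthogonalGroup (Fin 2) ℝ) with hUel
  have hmatS : matS Atil⁻¹ = (Uel : Matrix (Fin 2) (Fin 2) ℝ) := rfl
  set iso := isoO Uel with hiso
  have hcoe : ∀ v, iso v = mact (matS Atil⁻¹) v := fun v => rfl
  set g : EuclideanSpace ℝ (Fin 2) → ℝ := fun y => r (mact (matS Atil⁻¹) y) with hg
  have hgiso : g = r ∘ iso := rfl
  -- continuous linear map version
  set clm : EuclideanSpace ℝ (Fin 2) →L[ℝ] EuclideanSpace ℝ (Fin 2) :=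
    (iso.toContinuousLinearEquiv : EuclideanSpace ℝ (Fin 2) →L[ℝ] EuclideanSpace ℝ (Fin 2)) with hclm
  have hclm_apply : ∀ v, clm v = mact (matS Atil⁻¹) v := fun v => rfl
  have hgclm : g = r ∘ clm := rfl
  have hg_cd : ContDiff ℝ ((d + 2 : ℕ) : ℕ∞) g := by
    rw [hgclm]; exact hr.comp clm.contDiff
  have hg_bd : ∀ z, ∀ j ≤ d + 2, ‖iteratedFDeriv ℝ j g z‖ ≤ M := by
    intro z j hj
    rw [hgiso, iso.norm_iteratedFDeriv_comp_right r z j]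
    exact hbd _ j hj
  have key := hcons g hg_cd hg_bd A x h hpos hle
  have hsum : (∑ p ∈ P, c A p h * g (x + h • gridpt p))
      = ∑ p ∈ P, c A p h * r (mact (matS Atil⁻¹) (x + h • gridpt p)) := rfl
  have hchi : chi β (matS A) g x = chi β (matS (Atil⁻¹ * A)) r (mact (matS Atil⁻¹) x) := by
    unfold chi
    apply Finset.sum_congr rfl
    intro m _
    split_ifs with hm
    · congr 1
      have hcomp := clm.iteratedFDeriv_comp_right hr x
        (by exact_mod_cast hm.trans (by omega : d ≤ d + 2))
      rw [hgclm, hcomp, ContinuousMultilinearMap.compContinuousLinearMap_apply]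
      have hdirs : (fun j => clm (dirs (matS A) (fun i => (m i : ℕ)) j))
          = dirs (matS (Atil⁻¹ * A)) (fun i => (m i : ℕ)) := by
        funext j
        rw [hclm_apply, ← dirs_mul]
        congr 1
      rw [hdirs]
      rfl
    · rfl
  rw [hsum, hchi] at key
  exact key
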